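/- Let G be a finite group and Y a subgroup of the centre Z(G) of G. Then β_{G/Y}(uY) = β_G(u) for each u ∈ G. -/
import Mathlib


/-- The map `θ_u : G → G`, `θ_u(g) = [g^{-u}, g]` where `[x,y] = x⁻¹y⁻¹xy`
and `x^y = y⁻¹xy`. -/
def thetaMap {G : Type*} [Group G] (u g : G) : G :=
  (u⁻¹ * g⁻¹ * u)⁻¹ * g⁻¹ * (u⁻¹ * g⁻¹ * u) * g

/-- `Θ_G(u) = {g ∈ G ∣ θ_u^n(g) = g for some n > 0}`. -/
def ThetaSet {G : Type*} [Group G] (u : G) : Set G :=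
  {g | ∃ n > 0, (thetaMap u)^[n] g = g}

/-- The forward orbit of `g` under `θ_u`; for `g ∈ Θ_G(u)` this is the orbit of `g`
under the permutation that `θ_u` induces on `Θ_G(u)`. -/
def thetaOrbit {G : Type*} [Group G] (u g : G) : Set G :=
  {h | ∃ n : ℕ, (thetaMap u)^[n] g = h}

/-- The eventual orbits of `θ_u`: the orbits of the permutation induced by `θ_u`
on `Θ_G(u)`, other than the fixed orbit `{1}`. -/
def eventualOrbits {G : Type*} [Group G] (u : G) : Set (Set G) :=
  {O | (∃ g ∈ ThetaSet u, O = thetaOrbit u g) ∧ O ≠ {1}}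

/-- `β_G(u)`: the number of eventual orbits of `θ_u`. -/
noncomputable def beta {G : Type*} [Group G] (u : G) : ℕ :=
  (eventualOrbits u).ncard

section Aux

variable {G : Type*} [Group G]

lemma thetaMap_one (u : G) : thetaMap u 1 = 1 := by simp [thetaMap]

lemma iterate_thetaMap_one (u : G) (n : ℕ) : (thetaMap u)^[n] 1 = 1 :=
  Function.iterate_fixed (thetaMap_one u) n

lemma thetaOrbit_one (u : G) : thetaOrbit u 1 = {1} := by
  ext h
  simp [thetaOrbit, iterate_thetaMap_one, eq_comm]

lemma thetaMap_mul_central (u g z : G)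
    (hz : z ∈ Subgroup.center G) : thetaMap u (g * z) = thetaMap u g := by
  have h : ∀ x : G, x * z = z * x := fun x => Subgroup.mem_center_iff.mp hz x
  have h' : ∀ x : G, x * z⁻¹ = z⁻¹ * x := fun x =>
    Subgroup.mem_center_iff.mp (Subgroup.inv_mem _ hz) x
  have hconj : ∀ x : G, z⁻¹ * x * z = x := fun x => by
    rw [mul_assoc, h x, inv_mul_cancel_left]
  have h1 : u⁻¹ * (g * z)⁻¹ * u = z⁻¹ * (u⁻¹ * g⁻¹ * u) := by
    rw [mul_inv_rev, ← mul_assoc, h' u⁻¹]; group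
  calc thetaMap u (g * z)
      = (z⁻¹ * (u⁻¹ * g⁻¹ * u))⁻¹ * (g * z)⁻¹ * (z⁻¹ * (u⁻¹ * g⁻¹ * u)) * (g * z) := by
        rw [thetaMap, h1]
    _ = (u⁻¹ * g⁻¹ * u)⁻¹ * g⁻¹ * (z⁻¹ * ((u⁻¹ * g⁻¹ * u) * g) * z) := by group
    _ = thetaMap u g := by rw [hconj, thetaMap]; group

lemma thetaMap_central (u z : G) (hz : z ∈ Subgroup.center G) :
    thetaMap u z = 1 := by
  have := thetaMap_mul_central u 1 z hz
  rwa [one_mul, thetaMap_one] at this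

variable (Y : Subgroup G) [Y.Normal]

lemma mk_thetaMap (u g : G) :
    ((thetaMap u g : G) : G ⧸ Y) = thetaMap (u : G ⧸ Y) (g : G ⧸ Y) := by
  simp [thetaMap]

lemma mk_iterate_thetaMap (u g : G) (n : ℕ) :
    (((thetaMap u)^[n] g : G) : G ⧸ Y) = (thetaMap (u : G ⧸ Y))^[n] (g : G ⧸ Y) := by
  induction n with
  | zero => rfl
  | succ n ih =>
      rw [Function.iterate_succ_apply', Function.iterate_succ_apply',
        mk_thetaMap, ih]

lemma thetaMap_eq_of_mk_eq (hY : Y ≤ Subgroup.center G) (u g₁ g₂ : G)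
    (h : (g₁ : G ⧸ Y) = (g₂ : G ⧸ Y)) : thetaMap u g₁ = thetaMap u g₂ := by
  have hz : g₁⁻¹ * g₂ ∈ Y := QuotientGroup.eq.mp h
  have : g₂ = g₁ * (g₁⁻¹ * g₂) := by group
  rw [this, thetaMap_mul_central u g₁ _ (hY hz)]

lemma iterate_thetaMap_eq_of_mk_eq (hY : Y ≤ Subgroup.center G) (u g₁ g₂ : G)
    (h : (g₁ : G ⧸ Y) = (g₂ : G ⧸ Y)) (n : ℕ) (hn : 0 < n) :
    (thetaMap u)^[n] g₁ = (thetaMap u)^[n] g₂ := by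
  obtain ⟨k, rfl⟩ := Nat.exists_eq_succ_of_ne_zero hn.ne'
  rw [Function.iterate_succ_apply, Function.iterate_succ_apply,
    thetaMap_eq_of_mk_eq Y hY u g₁ g₂ h]

end Aux

section IterAux

variable {α : Type*}

lemma iterate_mul_period (f : α → α) {g : α} {p : ℕ} (hg : f^[p] g = g) :
    ∀ k : ℕ, f^[k * p] g = g := by
  intro k
  induction k with
  | zero => simp
  | succ k ih =>
      rw [Nat.succ_mul, Function.iterate_add_apply, hg, ih]

lemma exists_eventually_periodic [Finite α] (f : α → α) (g : α) :
    ∃ a p : ℕ, 0 < p ∧ f^[p] (f^[a] g) = f^[a] g := by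
  obtain ⟨x, y, hxy, hfe⟩ :=
    Finite.exists_ne_map_eq_of_infinite (fun n : ℕ => f^[n] g)
  rcases hxy.lt_or_gt with hlt | hlt
  · exact ⟨x, y - x, Nat.sub_pos_of_lt hlt, by
      rw [← Function.iterate_add_apply, Nat.sub_add_cancel hlt.le]; exact hfe.symm⟩
  · exact ⟨y, x - y, Nat.sub_pos_of_lt hlt, by
      rw [← Function.iterate_add_apply, Nat.sub_add_cancel hlt.le]; exact hfe⟩

end IterAux

lemma thetaOrbit_iterate {G : Type*} [Group G] (u : G) {g : G} {p : ℕ}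
    (hp : 0 < p) (hg : (thetaMap u)^[p] g = g) (m : ℕ) :
    thetaOrbit u ((thetaMap u)^[m] g) = thetaOrbit u g := by
  ext h
  constructor
  · rintro ⟨n, rfl⟩
    exact ⟨n + m, Function.iterate_add_apply (thetaMap u) n m g⟩
  · rintro ⟨n, rfl⟩
    refine ⟨n + m * p - m, ?_⟩
    have hle : m ≤ n + m * p := by
      calc m ≤ m * p := Nat.le_mul_of_pos_right m hp
        _ ≤ n + m * p := Nat.le_add_left _ _
    rw [← Function.iterate_add_apply, Nat.sub_add_cancel hle,
      Function.iterate_add_apply, iterate_mul_period (thetaMap u) hg m]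

lemma mk_image_thetaOrbit {G : Type*} [Group G] (Y : Subgroup G) [Y.Normal]
    (u g : G) :
    (QuotientGroup.mk : G → G ⧸ Y) '' thetaOrbit u g
      = thetaOrbit (u : G ⧸ Y) (g : G ⧸ Y) := by
  ext h
  constructor
  · rintro ⟨x, ⟨n, rfl⟩, rfl⟩
    exact ⟨n, (mk_iterate_thetaMap Y u g n).symm⟩
  · rintro ⟨n, rfl⟩
    exact ⟨(thetaMap u)^[n] g, ⟨n, rfl⟩, mk_iterate_thetaMap Y u g n⟩

/-- If `Y` is a subgroup of the centre of a finite group `G`, then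
`β_{G/Y}(uY) = β_G(u)` for each `u ∈ G`. -/
theorem beta_central_quotient_eq {G : Type*} [Group G] [Finite G] (Y : Subgroup G)
    [Y.Normal] (hY : Y ≤ Subgroup.center G) (u : G) :
    beta (u : G ⧸ Y) = beta u := by
  classical
  have key : eventualOrbits (u : G ⧸ Y)
      = (fun O => (QuotientGroup.mk : G → G ⧸ Y) '' O) '' eventualOrbits u := by
    ext Oq
    constructor
    · rintro ⟨⟨gq, ⟨n, hn, hfix⟩, rfl⟩, hne⟩
      obtain ⟨g, rfl⟩ := QuotientGroup.mk_surjective gq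
      obtain ⟨a, p, hp, hper⟩ := exists_eventually_periodic (thetaMap u) g
      have himg : (QuotientGroup.mk : G → G ⧸ Y) '' thetaOrbit u ((thetaMap u)^[a] g)
          = thetaOrbit (u : G ⧸ Y) (g : G ⧸ Y) := by
        rw [mk_image_thetaOrbit, mk_iterate_thetaMap,
          thetaOrbit_iterate (u : G ⧸ Y) hn hfix a]
      refine ⟨thetaOrbit u ((thetaMap u)^[a] g),
        ⟨⟨(thetaMap u)^[a] g, ⟨p, hp, hper⟩, rfl⟩, ?_⟩, himg⟩
      intro hcontra
      apply hne
      rw [← himg, hcontra]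
      simp
    · rintro ⟨O, ⟨⟨g, ⟨n, hn, hfix⟩, rfl⟩, hne⟩, rfl⟩
      dsimp only
      refine ⟨⟨(g : G ⧸ Y), ⟨n, hn, by
        rw [← mk_iterate_thetaMap Y u g n, hfix]⟩,
        mk_image_thetaOrbit Y u g⟩, ?_⟩
      intro hcontra
      apply hne
      have hg1 : ((g : G ⧸ Y)) = 1 := by
        have hmem : (QuotientGroup.mk g : G ⧸ Y)
            ∈ (QuotientGroup.mk : G → G ⧸ Y) '' thetaOrbit u g := ⟨g, ⟨0, rfl⟩, rfl⟩
        rw [hcontra] at hmem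
        exact hmem
      have hgY : g ∈ Y := (QuotientGroup.eq_one_iff g).mp hg1
      have hθg : thetaMap u g = 1 := thetaMap_central u g (hY hgY)
      have hgone : g = 1 := by
        obtain ⟨k, rfl⟩ := Nat.exists_eq_succ_of_ne_zero hn.ne'
        rw [← hfix, Function.iterate_succ_apply, hθg, iterate_thetaMap_one]
      rw [hgone, thetaOrbit_one]
  have hinj : Set.InjOn (fun O => (QuotientGroup.mk : G → G ⧸ Y) '' O)
      (eventualOrbits u) := by
    rintro O₁ ⟨⟨g₁, ⟨p₁, hp₁, hfix₁⟩, rfl⟩, -⟩ O₂ ⟨⟨g₂, ⟨p₂, hp₂, hfix₂⟩, rfl⟩, -⟩ himg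
    dsimp only at himg
    have hmem : (QuotientGroup.mk g₂ : G ⧸ Y)
        ∈ (QuotientGroup.mk : G → G ⧸ Y) '' thetaOrbit u g₁ := by
      rw [himg]; exact ⟨g₂, ⟨0, rfl⟩, rfl⟩
    obtain ⟨x, ⟨m, rfl⟩, hx⟩ := hmem
    have hg₂ : g₂ = (thetaMap u)^[p₂ + m] g₁ := by
      rw [Function.iterate_add_apply, iterate_thetaMap_eq_of_mk_eq Y hY u
        ((thetaMap u)^[m] g₁) g₂ hx p₂ hp₂]
      exact hfix₂.symm
    rw [hg₂, thetaOrbit_iterate u hp₁ hfix₁]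
  rw [beta, beta, key, Set.ncard_image_of_injOn hinj]
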